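/- For every k ≥ 0 and every integer m ≥ 0, the coefficient of z^m q^n in (1 − z^{−2}) / ((qz;q)_k (q/z;q)_k) is nonnegative for all n ≥ 0. -/

import Mathlib

/-- `akm k m n` is the coefficient of `z^m q^n` in
`1/((qz;q)_k (q/z;q)_k) = ∏_{i=1}^{k} 1/((1 - z q^i)(1 - q^i/z))`, where
`(x;q)_k = ∏_{i=0}^{k-1} (1 - x q^i)`: it counts pairs `(α, β)` of `k`-tuples of
nonnegative integers with `∑_{i=1}^k i(α_i + β_i) = n` and `∑ α_i - ∑ β_i = m`. -/
def akm (k : ℕ) (m : ℤ) (n : ℕ) : ℕ :=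
  (Finset.univ.filter
    (fun p : (Fin k → Fin (n + 1)) × (Fin k → Fin (n + 1)) =>
      (∑ i : Fin k, (i.1 + 1) * (((p.1 i : ℕ)) + (p.2 i : ℕ)) = n) ∧
      ((∑ i : Fin k, ((p.1 i : ℕ) : ℤ)) - ∑ i : Fin k, ((p.2 i : ℕ) : ℤ)) = m)).card

namespace AkmAux

open Finset

variable {k n : ℕ}

/-- `av f l` : the value of `f` at `l`, as an integer, `0` out of range. -/
noncomputable def av (f : Fin k → Fin (n + 1)) (l : ℕ) : ℤ :=
  if h : l < k then ((f ⟨l, h⟩ : ℕ) : ℤ) else 0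

lemma av_nonneg (f : Fin k → Fin (n + 1)) (l : ℕ) : 0 ≤ av f l := by
  unfold av; split
  · positivity
  · exact le_rfl

lemma av_of_lt (f : Fin k → Fin (n + 1)) {l : ℕ} (h : l < k) :
    av f l = ((f ⟨l, h⟩ : ℕ) : ℤ) := dif_pos h

lemma av_of_ge (f : Fin k → Fin (n + 1)) {l : ℕ} (h : ¬ l < k) : av f l = 0 := dif_neg h

lemma av_fin (f : Fin k → Fin (n + 1)) (i : Fin k) :
    av f i.val = ((f i : ℕ) : ℤ) := av_of_lt f i.isLt

lemma sum_av (f : Fin k → Fin (n + 1)) :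
    ∑ l ∈ range k, av f l = ∑ i : Fin k, ((f i : ℕ) : ℤ) := by
  rw [← Fin.sum_univ_eq_sum_range (av f) k]
  exact Finset.sum_congr rfl fun i _ => av_fin f i

/-- shifted prefix sums -/
noncomputable def Qf (p : (Fin k → Fin (n + 1)) × (Fin k → Fin (n + 1))) (s : ℕ) : ℤ :=
  (∑ l ∈ range s, av p.1 l) - ∑ l ∈ range (s + 1), av p.2 l

lemma Qf_succ_sub (p : (Fin k → Fin (n + 1)) × (Fin k → Fin (n + 1))) (s : ℕ) :
    Qf p (s + 1) - Qf p s = av p.1 s - av p.2 (s + 1) := by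
  unfold Qf
  rw [Finset.sum_range_succ (av p.1) s, Finset.sum_range_succ (av p.2) (s + 1)]
  ring

lemma Qf_zero (p : (Fin k → Fin (n + 1)) × (Fin k → Fin (n + 1))) :
    Qf p 0 = -av p.2 0 := by
  unfold Qf; simp

lemma Qf_k (p : (Fin k → Fin (n + 1)) × (Fin k → Fin (n + 1))) :
    Qf p k = (∑ i : Fin k, ((p.1 i : ℕ) : ℤ)) - ∑ i : Fin k, ((p.2 i : ℕ) : ℤ) := by
  unfold Qf
  rw [Finset.sum_range_succ (av p.2) k, sum_av, sum_av]
  have : av p.2 k = 0 := dif_neg (lt_irrefl k)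
  rw [this]; ring

/-- index at which the crystal lowering operator acts (1 + last argmin of `Qf`). -/
noncomputable def tt (p : (Fin k → Fin (n + 1)) × (Fin k → Fin (n + 1))) : ℕ :=
  Nat.findGreatest (fun s => ∀ u ≤ k, Qf p s ≤ Qf p u) k

lemma tt_le (p : (Fin k → Fin (n + 1)) × (Fin k → Fin (n + 1))) : tt p ≤ k :=
  Nat.findGreatest_le k

lemma tt_spec (p : (Fin k → Fin (n + 1)) × (Fin k → Fin (n + 1))) :
    ∀ u ≤ k, Qf p (tt p) ≤ Qf p u := by
  obtain ⟨s, hs, hmin⟩ := Finset.exists_min_image (range (k + 1)) (Qf p)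
    ⟨0, mem_range.2 (Nat.succ_pos k)⟩
  exact Nat.findGreatest_spec (P := fun s => ∀ u ≤ k, Qf p s ≤ Qf p u)
    (Nat.lt_succ_iff.1 (mem_range.1 hs))
    (fun u hu => hmin u (mem_range.2 (Nat.lt_succ_of_le hu)))

lemma tt_gt (p : (Fin k → Fin (n + 1)) × (Fin k → Fin (n + 1))) {u : ℕ}
    (hu : u ≤ k) (h : tt p < u) : Qf p (tt p) + 1 ≤ Qf p u := by
  by_contra hc
  push_neg at hc
  have hc' : Qf p u ≤ Qf p (tt p) := by omega
  have hall : ∀ v ≤ k, Qf p u ≤ Qf p v := fun v hv => le_trans hc' (tt_spec p v hv)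
  have h2 : u ≤ tt p := Nat.le_findGreatest (P := fun s => ∀ u ≤ k, Qf p s ≤ Qf p u) hu hall
  omega

section WithMem

variable (m : ℤ)

lemma tt_lt_k (hm0 : 0 ≤ m) (p : (Fin k → Fin (n + 1)) × (Fin k → Fin (n + 1)))
    (hm2 : (∑ i : Fin k, ((p.1 i : ℕ) : ℤ)) - ∑ i : Fin k, ((p.2 i : ℕ) : ℤ) = m + 2) :
    tt p < k := by
  have h1 : Qf p (tt p) ≤ Qf p 0 := tt_spec p 0 (Nat.zero_le k)
  have h2 : Qf p 0 ≤ 0 := by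
    rw [Qf_zero]
    have := av_nonneg p.2 0
    omega
  have h3 : Qf p k = m + 2 := by rw [Qf_k]; exact hm2
  rcases lt_or_eq_of_le (tt_le p) with h | h
  · exact h
  · exfalso; rw [h, h3] at h1; omega

lemma a_ge (p : (Fin k → Fin (n + 1)) × (Fin k → Fin (n + 1))) (h : tt p < k) :
    av p.2 (tt p + 1) + 1 ≤ av p.1 (tt p) := by
  have h1 := tt_gt p (show tt p + 1 ≤ k from h) (Nat.lt_succ_self _)
  have h2 := Qf_succ_sub p (tt p)
  omega

lemma a_pos (p : (Fin k → Fin (n + 1)) × (Fin k → Fin (n + 1))) (h : tt p < k) :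
    1 ≤ (p.1 ⟨tt p, h⟩ : ℕ) := by
  have h1 := a_ge p h
  have h2 := av_nonneg p.2 (tt p + 1)
  rw [av_of_lt p.1 h] at h1
  omega

lemma b_bound (p : (Fin k → Fin (n + 1)) × (Fin k → Fin (n + 1))) (h : tt p < k)
    (hn : ∑ i : Fin k, (i.1 + 1) * (((p.1 i : ℕ)) + (p.2 i : ℕ)) = n) :
    (p.2 ⟨tt p, h⟩ : ℕ) + 1 ≤ n := by
  have h0 := Finset.single_le_sum
    (f := fun x : Fin k => (x.1 + 1) * ((p.1 x : ℕ) + (p.2 x : ℕ)))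
    (fun x _ => Nat.zero_le _) (mem_univ (⟨tt p, h⟩ : Fin k))
  dsimp only at h0
  rw [hn] at h0
  have ha := a_pos p h
  set A := (p.1 (⟨tt p, h⟩ : Fin k) : ℕ)
  set B := (p.2 (⟨tt p, h⟩ : Fin k) : ℕ)
  have hle : A + B ≤ (tt p + 1) * (A + B) := Nat.le_mul_of_pos_left _ (Nat.succ_pos _)
  have hv : ((⟨tt p, h⟩ : Fin k).1 + 1) * (A + B) = (tt p + 1) * (A + B) := rfl
  rw [hv] at h0
  omega

end WithMem

/-- the crystal lowering operator -/
noncomputable def phi (p : (Fin k → Fin (n + 1)) × (Fin k → Fin (n + 1))) :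
    (Fin k → Fin (n + 1)) × (Fin k → Fin (n + 1)) :=
  if h : tt p < k then
    (Function.update p.1 ⟨tt p, h⟩
      ⟨(p.1 ⟨tt p, h⟩ : ℕ) - 1, by have := (p.1 ⟨tt p, h⟩).isLt; omega⟩,
     Function.update p.2 ⟨tt p, h⟩
      ⟨min ((p.2 ⟨tt p, h⟩ : ℕ) + 1) n,
       by have := Nat.min_le_right ((p.2 ⟨tt p, h⟩ : ℕ) + 1) n; omega⟩)
  else p

lemma sum_cast_update (f : Fin k → Fin (n + 1)) (i : Fin k) (c : Fin (n + 1)) :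
    ∑ x : Fin k, ((Function.update f i c x : ℕ) : ℤ)
      = (∑ x : Fin k, ((f x : ℕ) : ℤ)) + (c : ℕ) - (f i : ℕ) := by
  classical
  have h1 : (fun x => ((Function.update f i c x : ℕ) : ℤ))
      = Function.update (fun x => ((f x : ℕ) : ℤ)) i ((c : ℕ) : ℤ) := by
    funext x
    exact Function.apply_update (fun (_ : Fin k) (v : Fin (n + 1)) => ((v : ℕ) : ℤ)) f i c x
  rw [h1, Finset.sum_update_of_mem (mem_univ i)]
  have h2 : ∑ x : Fin k, ((f x : ℕ) : ℤ)
      = (∑ x ∈ (univ : Finset (Fin k)) \ {i}, ((f x : ℕ) : ℤ)) + ((f i : ℕ) : ℤ) :=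
    Finset.sum_eq_sum_sdiff_singleton_add (mem_univ i) _
  omega

lemma phi_mem (m : ℤ) (hm0 : 0 ≤ m) (p : (Fin k → Fin (n + 1)) × (Fin k → Fin (n + 1)))
    (hn : ∑ i : Fin k, (i.1 + 1) * (((p.1 i : ℕ)) + (p.2 i : ℕ)) = n)
    (hm2 : (∑ i : Fin k, ((p.1 i : ℕ) : ℤ)) - ∑ i : Fin k, ((p.2 i : ℕ) : ℤ) = m + 2) :
    (∑ i : Fin k, (i.1 + 1) * ((((phi p).1 i : ℕ)) + ((phi p).2 i : ℕ)) = n) ∧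
    ((∑ i : Fin k, (((phi p).1 i : ℕ) : ℤ)) - ∑ i : Fin k, (((phi p).2 i : ℕ) : ℤ)) = m := by
  have hk := tt_lt_k m hm0 p hm2
  have ha := a_pos p hk
  have hb := b_bound p hk hn
  unfold phi
  rw [dif_pos hk]
  dsimp only
  constructor
  · refine Eq.trans (Finset.sum_congr rfl fun x _ => ?_) hn
    by_cases hx : x = (⟨tt p, hk⟩ : Fin k)
    · rw [hx, Function.update_self, Function.update_self]
      have hv : ((⟨(p.1 ⟨tt p, hk⟩ : ℕ) - 1, by have := (p.1 ⟨tt p, hk⟩).isLt; omega⟩ :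
            Fin (n + 1)) : ℕ)
          + ((⟨min ((p.2 ⟨tt p, hk⟩ : ℕ) + 1) n,
              by have := Nat.min_le_right ((p.2 ⟨tt p, hk⟩ : ℕ) + 1) n; omega⟩ :
            Fin (n + 1)) : ℕ)
          = (p.1 ⟨tt p, hk⟩ : ℕ) + (p.2 ⟨tt p, hk⟩ : ℕ) := by
        simp only [Fin.val_mk]
        omega
      rw [hv]
    · rw [Function.update_of_ne hx, Function.update_of_ne hx]
  · rw [sum_cast_update, sum_cast_update]
    simp only [Fin.val_mk]
    omega

lemma phi_ne (m : ℤ) (hm0 : 0 ≤ m)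
    (p p' : (Fin k → Fin (n + 1)) × (Fin k → Fin (n + 1)))
    (hn : ∑ i : Fin k, (i.1 + 1) * (((p.1 i : ℕ)) + (p.2 i : ℕ)) = n)
    (hm2 : (∑ i : Fin k, ((p.1 i : ℕ) : ℤ)) - ∑ i : Fin k, ((p.2 i : ℕ) : ℤ) = m + 2)
    (hn' : ∑ i : Fin k, (i.1 + 1) * (((p'.1 i : ℕ)) + (p'.2 i : ℕ)) = n)
    (hm2' : (∑ i : Fin k, ((p'.1 i : ℕ) : ℤ)) - ∑ i : Fin k, ((p'.2 i : ℕ) : ℤ) = m + 2)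
    (hlt : tt p < tt p') (hphi : phi p = phi p') : False := by
  have hk := tt_lt_k m hm0 p hm2
  have hk' := tt_lt_k m hm0 p' hm2'
  have ha := a_pos p hk
  have ha' := a_pos p' hk'
  have hb := b_bound p hk hn
  have hb' := b_bound p' hk' hn'
  unfold phi at hphi
  rw [dif_pos hk, dif_pos hk'] at hphi
  have e1 := congrArg Prod.fst hphi
  have e2 := congrArg Prod.snd hphi
  simp only at e1 e2
  have hne : (⟨tt p, hk⟩ : Fin k) ≠ ⟨tt p', hk'⟩ := by
    intro hEq
    have := congrArg Fin.val hEq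
    simp only [Fin.val_mk] at this
    omega
  -- pointwise consequences
  have f1t : (p'.1 ⟨tt p, hk⟩ : ℕ) = (p.1 ⟨tt p, hk⟩ : ℕ) - 1 := by
    have h := congrFun e1 (⟨tt p, hk⟩ : Fin k)
    rw [Function.update_self, Function.update_of_ne hne] at h
    have := congrArg Fin.val h
    simp only [Fin.val_mk] at this
    omega
  have f1t' : (p.1 ⟨tt p', hk'⟩ : ℕ) = (p'.1 ⟨tt p', hk'⟩ : ℕ) - 1 := by
    have h := congrFun e1 (⟨tt p', hk'⟩ : Fin k)
    rw [Function.update_self, Function.update_of_ne (Ne.symm hne)] at h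
    have := congrArg Fin.val h
    simp only [Fin.val_mk] at this
    omega
  have f1o : ∀ x : Fin k, x ≠ (⟨tt p, hk⟩ : Fin k) → x ≠ (⟨tt p', hk'⟩ : Fin k) →
      p.1 x = p'.1 x := by
    intro x hx1 hx2
    have h := congrFun e1 x
    rwa [Function.update_of_ne hx1, Function.update_of_ne hx2] at h
  have f2t : (p'.2 ⟨tt p, hk⟩ : ℕ) = (p.2 ⟨tt p, hk⟩ : ℕ) + 1 := by
    have h := congrFun e2 (⟨tt p, hk⟩ : Fin k)
    rw [Function.update_self, Function.update_of_ne hne] at h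
    have := congrArg Fin.val h
    simp only [Fin.val_mk] at this
    omega
  have f2t' : (p.2 ⟨tt p', hk'⟩ : ℕ) = (p'.2 ⟨tt p', hk'⟩ : ℕ) + 1 := by
    have h := congrFun e2 (⟨tt p', hk'⟩ : Fin k)
    rw [Function.update_self, Function.update_of_ne (Ne.symm hne)] at h
    have := congrArg Fin.val h
    simp only [Fin.val_mk] at this
    omega
  have f2o : ∀ x : Fin k, x ≠ (⟨tt p, hk⟩ : Fin k) → x ≠ (⟨tt p', hk'⟩ : Fin k) →
      p.2 x = p'.2 x := by
    intro x hx1 hx2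
    have h := congrFun e2 x
    rwa [Function.update_of_ne hx1, Function.update_of_ne hx2] at h
  -- pointwise av relation
  have H1 : ∀ l, av p'.1 l
      = av p.1 l + (if l = tt p' then (1 : ℤ) else 0) - (if l = tt p then (1 : ℤ) else 0) := by
    intro l
    by_cases hl : l < k
    · rw [av_of_lt p'.1 hl, av_of_lt p.1 hl]
      by_cases h1 : l = tt p
      · have hfe : (⟨l, hl⟩ : Fin k) = ⟨tt p, hk⟩ := by
          apply Fin.val_inj.mp; simpa using h1
        rw [if_neg (by omega), if_pos h1, hfe]
        omega
      · by_cases h2 : l = tt p'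
        · have hfe : (⟨l, hl⟩ : Fin k) = ⟨tt p', hk'⟩ := by
            apply Fin.val_inj.mp; simpa using h2
          rw [if_pos h2, if_neg h1, hfe]
          omega
        · have hx1 : (⟨l, hl⟩ : Fin k) ≠ ⟨tt p, hk⟩ := by
            intro hEq; exact h1 (by simpa using congrArg Fin.val hEq)
          have hx2 : (⟨l, hl⟩ : Fin k) ≠ ⟨tt p', hk'⟩ := by
            intro hEq; exact h2 (by simpa using congrArg Fin.val hEq)
          rw [f1o _ hx1 hx2, if_neg h2, if_neg h1]
          ring
    · rw [av_of_ge p'.1 hl, av_of_ge p.1 hl, if_neg (by omega), if_neg (by omega)]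
      ring
  have H2 : ∀ l, av p'.2 l
      = av p.2 l - (if l = tt p' then (1 : ℤ) else 0) + (if l = tt p then (1 : ℤ) else 0) := by
    intro l
    by_cases hl : l < k
    · rw [av_of_lt p'.2 hl, av_of_lt p.2 hl]
      by_cases h1 : l = tt p
      · have hfe : (⟨l, hl⟩ : Fin k) = ⟨tt p, hk⟩ := by
          apply Fin.val_inj.mp; simpa using h1
        rw [if_neg (by omega), if_pos h1, hfe]
        omega
      · by_cases h2 : l = tt p'
        · have hfe : (⟨l, hl⟩ : Fin k) = ⟨tt p', hk'⟩ := by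
            apply Fin.val_inj.mp; simpa using h2
          rw [if_pos h2, if_neg h1, hfe]
          omega
        · have hx1 : (⟨l, hl⟩ : Fin k) ≠ ⟨tt p, hk⟩ := by
            intro hEq; exact h1 (by simpa using congrArg Fin.val hEq)
          have hx2 : (⟨l, hl⟩ : Fin k) ≠ ⟨tt p', hk'⟩ := by
            intro hEq; exact h2 (by simpa using congrArg Fin.val hEq)
          rw [f2o _ hx1 hx2, if_neg h2, if_neg h1]
          ring
    · rw [av_of_ge p'.2 hl, av_of_ge p.2 hl, if_neg (by omega), if_neg (by omega)]
      ring
  -- the Qf relation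
  have HQ : ∀ s, Qf p' s
      = Qf p s + ((if tt p' < s then (1 : ℤ) else 0) - (if tt p < s then (1 : ℤ) else 0))
        + ((if tt p' < s + 1 then (1 : ℤ) else 0) - (if tt p < s + 1 then (1 : ℤ) else 0)) := by
    intro s
    unfold Qf
    have e1s : ∑ l ∈ range s, av p'.1 l = (∑ l ∈ range s, av p.1 l)
        + ((if tt p' < s then (1 : ℤ) else 0) - (if tt p < s then (1 : ℤ) else 0)) := by
      rw [Finset.sum_congr rfl fun l _ => H1 l, Finset.sum_sub_distrib,
        Finset.sum_add_distrib, Finset.sum_ite_eq' (range s) (tt p') (fun _ => (1 : ℤ)),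
        Finset.sum_ite_eq' (range s) (tt p) (fun _ => (1 : ℤ))]
      simp only [Finset.mem_range]
      ring
    have e2s : ∑ l ∈ range (s + 1), av p'.2 l = (∑ l ∈ range (s + 1), av p.2 l)
        - ((if tt p' < s + 1 then (1 : ℤ) else 0) - (if tt p < s + 1 then (1 : ℤ) else 0)) := by
      rw [Finset.sum_congr rfl fun l _ => H2 l, Finset.sum_add_distrib,
        Finset.sum_sub_distrib,
        Finset.sum_ite_eq' (range (s + 1)) (tt p') (fun _ => (1 : ℤ)),
        Finset.sum_ite_eq' (range (s + 1)) (tt p) (fun _ => (1 : ℤ))]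
      simp only [Finset.mem_range]
      ring
    rw [e1s, e2s]
    ring
  have c1 : Qf p' (tt p) = Qf p (tt p) - 1 := by
    rw [HQ (tt p), if_neg (show ¬ tt p' < tt p by omega), if_neg (lt_irrefl (tt p)),
      if_neg (show ¬ tt p' < tt p + 1 by omega), if_pos (Nat.lt_succ_self (tt p))]
    ring
  have c2 : Qf p' (tt p') = Qf p (tt p') - 1 := by
    rw [HQ (tt p'), if_neg (lt_irrefl (tt p')), if_pos hlt,
      if_pos (Nat.lt_succ_self (tt p')), if_pos (show tt p < tt p' + 1 by omega)]
    ring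
  have d1 : Qf p (tt p) + 1 ≤ Qf p (tt p') := tt_gt p (le_of_lt hk') hlt
  have d2 : Qf p' (tt p') ≤ Qf p' (tt p) := tt_spec p' (tt p) (le_of_lt hk)
  omega

lemma phi_injOn (m : ℤ) (hm0 : 0 ≤ m)
    (p p' : (Fin k → Fin (n + 1)) × (Fin k → Fin (n + 1)))
    (hn : ∑ i : Fin k, (i.1 + 1) * (((p.1 i : ℕ)) + (p.2 i : ℕ)) = n)
    (hm2 : (∑ i : Fin k, ((p.1 i : ℕ) : ℤ)) - ∑ i : Fin k, ((p.2 i : ℕ) : ℤ) = m + 2)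
    (hn' : ∑ i : Fin k, (i.1 + 1) * (((p'.1 i : ℕ)) + (p'.2 i : ℕ)) = n)
    (hm2' : (∑ i : Fin k, ((p'.1 i : ℕ) : ℤ)) - ∑ i : Fin k, ((p'.2 i : ℕ) : ℤ) = m + 2)
    (hphi : phi p = phi p') : p = p' := by
  rcases lt_trichotomy (tt p) (tt p') with hlt | heq | hgt
  · exact absurd hphi (fun h => phi_ne m hm0 p p' hn hm2 hn' hm2' hlt h)
  · have hk := tt_lt_k m hm0 p hm2
    have hk' := tt_lt_k m hm0 p' hm2'
    have ha := a_pos p hk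
    have ha' := a_pos p' hk'
    have hb := b_bound p hk hn
    have hb' := b_bound p' hk' hn'
    have hit : (⟨tt p, hk⟩ : Fin k) = ⟨tt p', hk'⟩ := Fin.val_inj.mp (by simpa using heq)
    unfold phi at hphi
    rw [dif_pos hk, dif_pos hk'] at hphi
    have e1 := congrArg Prod.fst hphi
    have e2 := congrArg Prod.snd hphi
    simp only at e1 e2
    have hval1 : (p.1 ⟨tt p, hk⟩ : ℕ) = (p'.1 ⟨tt p', hk'⟩ : ℕ) := by
      have h := congrFun e1 (⟨tt p, hk⟩ : Fin k)
      rw [Function.update_self] at h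
      have h2 : Function.update p'.1 (⟨tt p', hk'⟩ : Fin k)
          (⟨(p'.1 ⟨tt p', hk'⟩ : ℕ) - 1,
            by have := (p'.1 ⟨tt p', hk'⟩).isLt; omega⟩ : Fin (n + 1)) ⟨tt p, hk⟩
          = ⟨(p'.1 ⟨tt p', hk'⟩ : ℕ) - 1,
            by have := (p'.1 ⟨tt p', hk'⟩).isLt; omega⟩ := by
        rw [Function.update_apply, if_pos hit]
      rw [h2] at h
      have := congrArg Fin.val h
      simp only [Fin.val_mk] at this
      omega
    have hval2 : (p.2 ⟨tt p, hk⟩ : ℕ) = (p'.2 ⟨tt p', hk'⟩ : ℕ) := by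
      have h := congrFun e2 (⟨tt p, hk⟩ : Fin k)
      rw [Function.update_self] at h
      have h2 : Function.update p'.2 (⟨tt p', hk'⟩ : Fin k)
          (⟨min ((p'.2 ⟨tt p', hk'⟩ : ℕ) + 1) n,
            by have := Nat.min_le_right ((p'.2 ⟨tt p', hk'⟩ : ℕ) + 1) n; omega⟩ :
            Fin (n + 1)) ⟨tt p, hk⟩
          = ⟨min ((p'.2 ⟨tt p', hk'⟩ : ℕ) + 1) n,
            by have := Nat.min_le_right ((p'.2 ⟨tt p', hk'⟩ : ℕ) + 1) n; omega⟩ := by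
        rw [Function.update_apply, if_pos hit]
      rw [h2] at h
      have := congrArg Fin.val h
      simp only [Fin.val_mk] at this
      omega
    have h1 : p.1 = p'.1 := by
      funext x
      by_cases hx : x = (⟨tt p, hk⟩ : Fin k)
      · rw [hx]
        apply Fin.val_inj.mp
        rw [hval1]
        exact congrArg (fun y => (p'.1 y : ℕ)) hit.symm
      · have hx2 : x ≠ (⟨tt p', hk'⟩ : Fin k) := by rw [← hit]; exact hx
        have h := congrFun e1 x
        rwa [Function.update_of_ne hx, Function.update_of_ne hx2] at h
    have h2 : p.2 = p'.2 := by
      funext x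
      by_cases hx : x = (⟨tt p, hk⟩ : Fin k)
      · rw [hx]
        apply Fin.val_inj.mp
        rw [hval2]
        exact congrArg (fun y => (p'.2 y : ℕ)) hit.symm
      · have hx2 : x ≠ (⟨tt p', hk'⟩ : Fin k) := by rw [← hit]; exact hx
        have h := congrFun e2 x
        rwa [Function.update_of_ne hx, Function.update_of_ne hx2] at h
    exact Prod.ext h1 h2
  · exact absurd hphi.symm (fun h => phi_ne m hm0 p' p hn' hm2' hn hm2 hgt h)

end AkmAux

/-- For `m ≥ 0`, the coefficient of `z^m q^n` in `(1 - z^{-2})/((qz;q)_k (q/z;q)_k)`,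
namely `a_{k,m}(n) - a_{k,m+2}(n)`, is nonnegative. -/
theorem coeff_one_sub_zinvsq_nonneg (k : ℕ) (m : ℤ) (hm : 0 ≤ m) (n : ℕ) :
    0 ≤ (akm k m n : ℤ) - akm k (m + 2) n := by
  have key : akm k (m + 2) n ≤ akm k m n := by
    unfold akm
    apply Finset.card_le_card_of_injOn AkmAux.phi
    · intro p hp
      simp only [Finset.mem_coe, Finset.mem_filter, Finset.mem_univ, true_and] at hp ⊢
      exact AkmAux.phi_mem m hm p hp.1 hp.2
    · intro p hp p' hp' hphi
      simp only [Finset.coe_filter, Set.mem_setOf_eq, Finset.mem_univ, true_and] at hp hp'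
      exact AkmAux.phi_injOn m hm p p' hp.1 hp.2 hp'.1 hp'.2 hphi
  have key' : (akm k (m + 2) n : ℤ) ≤ akm k m n := by exact_mod_cast key
  omega
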